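/- Suppose the MDP is transient and the iterates w^{t,*} (defined by w^{0,*} = −1, w^{t+1,*} = L* w^{t,*}) are bounded below, i.e. there is M ∈ ℝ with (w^{t,*})_s ≥ M for all t, s; let w^{∞,*} := lim_{t→∞} w^{t,*} and let d* : S → A be a deterministic decision rule with w^{∞,*} = B^{d*} w^{∞,*} − b^{d*}. For an infinite sequence π = (d₀,d₁,…) of randomized decision rules, define w^t(π) by the finite-horizon recursion w^0 = −1, w^t(d₀,…,d_{t−1}) = B^{d₀} w^{t−1}(d₁,…,d_{t−1}) − b^{d₀}. Then for every such infinite sequence π, liminf_{t→∞} w^t(π) ≤ w^{∞,*} entrywise, and for the stationary sequence (d*, d*, …) the limit lim_{t→∞} w^t((d*)_∞) exists and equals w^{∞,*}. -/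

import Mathlib

open Matrix Filter

/-- Spectral radius of a real square matrix: the maximum modulus of its complex eigenvalues. -/
noncomputable def specRad {S : Type*} [Fintype S] [DecidableEq S] (M : Matrix S S ℝ) : ℝ :=
  sSup ((fun z : ℂ => ‖z‖) '' spectrum ℂ (M.map Complex.ofReal))

/-- Exponential transition matrix `B^a` for action `a`. -/
noncomputable def Bmat {S A : Type*} (p r : S → A → Option S → ℝ) (β : ℝ) (a : A) :
    Matrix S S ℝ :=
  Matrix.of fun s s' => p s a (some s') * Real.exp (-β * r s a (some s'))

/-- Exponential termination vector `b^a` for action `a` (`none` is the sink state `e`). -/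
noncomputable def bvec {S A : Type*} (p r : S → A → Option S → ℝ) (β : ℝ) (a : A) : S → ℝ :=
  fun s => p s a none * Real.exp (-β * r s a none)

/-- Optimal exponential Bellman operator `L*`. -/
noncomputable def Lstar {S A : Type*} [Fintype S] [Fintype A] [Nonempty A]
    (p r : S → A → Option S → ℝ) (β : ℝ) (w : S → ℝ) : S → ℝ :=
  fun s => Finset.univ.sup' Finset.univ_nonempty
    (fun a : A => (Bmat p r β a *ᵥ w) s - bvec p r β a s)

/-- Transition matrix `P^d` (restricted to non-sink states) of a deterministic decision rule. -/
def Pmat {S A : Type*} (p : S → A → Option S → ℝ) (d : S → A) : Matrix S S ℝ :=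
  Matrix.of fun s s' => p s (d s) (some s')

/-- Exponential transition matrix `B^d` of a deterministic decision rule. -/
noncomputable def Bdet {S A : Type*} (p r : S → A → Option S → ℝ) (β : ℝ) (d : S → A) :
    Matrix S S ℝ :=
  Matrix.of fun s s' => Bmat p r β (d s) s s'

/-- Exponential termination vector `b^d` of a deterministic decision rule. -/
noncomputable def bdet {S A : Type*} (p r : S → A → Option S → ℝ) (β : ℝ) (d : S → A) :
    S → ℝ :=
  fun s => bvec p r β (d s) s

/-- Exponential transition matrix `B^d` of a randomized decision rule `d : S → Δ(A)`. -/
noncomputable def Brand {S A : Type*} [Fintype A] (p r : S → A → Option S → ℝ) (β : ℝ)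
    (d : S → A → ℝ) : Matrix S S ℝ :=
  Matrix.of fun s s' => ∑ a : A, d s a * (p s a (some s') * Real.exp (-β * r s a (some s')))

/-- Exponential termination vector `b^d` of a randomized decision rule `d : S → Δ(A)`. -/
noncomputable def brand {S A : Type*} [Fintype A] (p r : S → A → Option S → ℝ) (β : ℝ)
    (d : S → A → ℝ) : S → ℝ :=
  fun s => ∑ a : A, d s a * (p s a none * Real.exp (-β * r s a none))

/-- Finite-horizon exponential value function of a Markov policy `π = (d₀, d₁, …)`:
`w^0 = -1` and `w^t(d₀,…,d_{t-1}) = B^{d₀} w^{t-1}(d₁,…,d_{t-1}) - b^{d₀}`. -/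
noncomputable def wpol {S A : Type*} [Fintype S] [Fintype A]
    (p r : S → A → Option S → ℝ) (β : ℝ) : ℕ → (ℕ → S → A → ℝ) → S → ℝ
  | 0, _ => fun _ => -1
  | t + 1, π => Brand p r β (π 0) *ᵥ wpol p r β t (fun k => π (k + 1)) - brand p r β (π 0)

lemma one_le_specRad {S : Type*} [Fintype S] [DecidableEq S]
    (P : Matrix S S ℝ) (Z : Finset S) (hZ : Z.Nonempty)
    (hrow : ∀ s ∈ Z, ∑ s' ∈ Z, P s s' = 1)
    (hout : ∀ s ∈ Z, ∀ s' ∉ Z, P s s' = 0) : 1 ≤ specRad P := by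
  classical
  -- det (1 - P) = 0
  have hdet : (1 - P).det = 0 := by
    rw [← Matrix.det_submatrix_equiv_self (Equiv.sumCompl (fun s => s ∈ Z)) (1 - P)]
    set M := (1 - P).submatrix (Equiv.sumCompl (fun s => s ∈ Z))
      (Equiv.sumCompl (fun s => s ∈ Z)) with hM
    rw [← Matrix.fromBlocks_toBlocks M]
    have h12 : M.toBlocks₁₂ = 0 := by
      ext z w
      simp only [Matrix.toBlocks₁₂, Matrix.of_apply, hM, Matrix.submatrix_apply,
        Equiv.sumCompl_apply_inl, Equiv.sumCompl_apply_inr,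
        Matrix.sub_apply, Matrix.zero_apply]
      rw [hout z.val z.prop w.val w.prop, Matrix.one_apply_ne, sub_zero]
      intro h; exact w.prop (h ▸ z.prop)
    rw [h12, Matrix.det_fromBlocks_zero₁₂]
    have hA : M.toBlocks₁₁.det = 0 := by
      rw [← Matrix.exists_mulVec_eq_zero_iff]
      refine ⟨fun _ => 1, ?_, ?_⟩
      · obtain ⟨z, hz⟩ := hZ
        intro h
        have := congrFun h ⟨z, hz⟩
        simpa using this
      · funext z
        simp only [Matrix.toBlocks₁₁, Matrix.mulVec, Matrix.of_apply, hM,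
          Matrix.submatrix_apply, Equiv.sumCompl_apply_inl,
          Matrix.sub_apply, dotProduct, mul_one, Pi.zero_apply]
        rw [Finset.sum_sub_distrib]
        have h1 : ∑ z' : {x // x ∈ Z}, (1 : Matrix S S ℝ) z.val z'.val = 1 := by
          rw [Finset.sum_congr rfl (fun z' _ => ?_), Finset.sum_ite_eq Finset.univ z
            (fun _ => (1:ℝ))]
          · simp
          · show (1 : Matrix S S ℝ) z.val z'.val = if z = z' then 1 else 0
            rw [Matrix.one_apply]; exact if_congr Subtype.ext_iff.symm rfl rfl
        have h2 : ∑ z' : {x // x ∈ Z}, P z.val z'.val = 1 := by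
          rw [← hrow z.val z.prop, ← Finset.sum_coe_sort Z (fun s' => P z.val s')]
        rw [h1, h2, sub_self]
    rw [hA, zero_mul]
  -- 1 ∈ spectrum
  have hmem : (1 : ℂ) ∈ spectrum ℂ (P.map Complex.ofReal) := by
    rw [spectrum.mem_iff, _root_.map_one]
    rw [Matrix.isUnit_iff_isUnit_det]
    have h : (1 - P.map Complex.ofReal) = (1 - P).map Complex.ofRealHom := by
      ext s s'
      simp [Matrix.one_apply, apply_ite Complex.ofReal]
    rw [h, ← RingHom.mapMatrix_apply, ← RingHom.map_det, hdet]
    simp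
  have hbdd : BddAbove ((fun z : ℂ => ‖z‖) '' spectrum ℂ (P.map Complex.ofReal)) :=
    ((Matrix.finite_spectrum _).image _).bddAbove
  calc (1:ℝ) = ‖(1:ℂ)‖ := by simp
    _ ≤ specRad P := le_csSup hbdd ⟨1, hmem, rfl⟩

section Key

variable {S : Type*} [Fintype S] [DecidableEq S] [Nonempty S]

lemma entry_pow_nonneg (B : Matrix S S ℝ) (hB : ∀ s s', 0 ≤ B s s') :
    ∀ t s s', 0 ≤ (B ^ t) s s' := by
  intro t
  induction t with
  | zero => intro s s'; by_cases h : s = s' <;> simp [Matrix.one_apply, h]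
  | succ t ih =>
    intro s s'
    rw [pow_succ]
    exact Finset.sum_nonneg fun j _ => mul_nonneg (ih s j) (hB j s')

lemma mulVec_mono (B : Matrix S S ℝ) (hB : ∀ s s', 0 ≤ B s s')
    {x y : S → ℝ} (h : ∀ s, x s ≤ y s) : ∀ s, (B *ᵥ x) s ≤ (B *ᵥ y) s :=
  fun _ => Finset.sum_le_sum fun s' _ => mul_le_mul_of_nonneg_left (h s') (hB _ s')

lemma mulVec_nonneg (B : Matrix S S ℝ) (hB : ∀ s s', 0 ≤ B s s')
    {x : S → ℝ} (h : ∀ s, 0 ≤ x s) : ∀ s, 0 ≤ (B *ᵥ x) s :=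
  fun _ => Finset.sum_nonneg fun s' _ => mul_nonneg (hB _ s') (h s')

lemma key_tendsto (B : Matrix S S ℝ) (hB : ∀ s s', 0 ≤ B s s') (u b : S → ℝ)
    (hu : ∀ s, 0 < u s) (hb : ∀ s, 0 ≤ b s)
    (hfixu : ∀ s, (B *ᵥ u) s + b s = u s)
    (hreach : ∀ s, ∃ k, 0 < ((B ^ k) *ᵥ b) s) (x : S → ℝ) (s : S) :
    Tendsto (fun t => ((B ^ t) *ᵥ x) s) atTop (nhds 0) := by
  classical
  have hBk : ∀ t s s', 0 ≤ (B ^ t) s s' := entry_pow_nonneg B hB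
  have hBkb : ∀ t s, 0 ≤ ((B ^ t) *ᵥ b) s := fun t => mulVec_nonneg _ (hBk t) hb
  have hBku : ∀ t s, 0 ≤ ((B ^ t) *ᵥ u) s :=
    fun t => mulVec_nonneg _ (hBk t) fun s => (hu s).le
  choose k hk using hreach
  set n := (Finset.univ.sup k) + 1 with hn
  have hnpos : 0 < n := Nat.succ_pos _
  set δ : S → ℝ := fun s => ∑ j ∈ Finset.range n, ((B ^ j) *ᵥ b) s with hδ
  have hδpos : ∀ s, 0 < δ s := by
    intro s
    refine Finset.sum_pos' (fun j _ => hBkb j s) ⟨k s, ?_, hk s⟩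
    exact Finset.mem_range.2 (Nat.lt_succ_of_le (Finset.le_sup (Finset.mem_univ s)))
  have hBub : ∀ s', (B *ᵥ u) s' = u s' - b s' := fun s' => by
    rw [← hfixu s']; ring
  have hiter : ∀ m s', ((B ^ m) *ᵥ u) s' =
      u s' - ∑ j ∈ Finset.range m, ((B ^ j) *ᵥ b) s' := by
    intro m
    induction m with
    | zero => intro s'; simp [Matrix.one_mulVec]
    | succ m ih =>
      intro s'
      have h1 : (B ^ (m + 1)) *ᵥ u = (B ^ m) *ᵥ (B *ᵥ u) := by
        rw [Matrix.mulVec_mulVec, ← pow_succ]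
      have h2 : B *ᵥ u = u - b := funext fun s' => hBub s'
      rw [h1, h2, Matrix.mulVec_sub, Finset.sum_range_succ]
      have := ih s'
      simp only [Pi.sub_apply, this]
      ring
  have hδle : ∀ s', ((B ^ n) *ᵥ u) s' = u s' - δ s' := fun s' => hiter n s'
  set ε : ℝ := Finset.univ.inf' Finset.univ_nonempty (fun s => δ s / u s) with hε
  have hεpos : 0 < ε := by
    rw [hε, Finset.lt_inf'_iff]
    exact fun s _ => div_pos (hδpos s) (hu s)
  have hεle : ∀ s', ε * u s' ≤ δ s' := by
    intro s'
    have h1 : ε ≤ δ s' / u s' := Finset.inf'_le _ (Finset.mem_univ s')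
    calc ε * u s' ≤ (δ s' / u s') * u s' :=
          mul_le_mul_of_nonneg_right h1 (hu s').le
      _ = δ s' := div_mul_cancel₀ _ (hu s').ne'
  have hε1 : ε ≤ 1 := by
    obtain ⟨s₀⟩ := (inferInstance : Nonempty S)
    have h1 : δ s₀ ≤ u s₀ := by
      have := hBku n s₀
      rw [hδle s₀] at this; linarith
    have h2 : ε ≤ δ s₀ / u s₀ := Finset.inf'_le _ (Finset.mem_univ s₀)
    calc ε ≤ δ s₀ / u s₀ := h2
      _ ≤ 1 := (div_le_one (hu s₀)).2 h1
  have hBn : ∀ s', ((B ^ n) *ᵥ u) s' ≤ (1 - ε) * u s' := by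
    intro s'
    rw [hδle s']
    have := hεle s'
    nlinarith [hu s']
  have hq : ∀ q s', ((B ^ (n * q)) *ᵥ u) s' ≤ (1 - ε) ^ q * u s' := by
    intro q
    induction q with
    | zero => intro s'; simp [Matrix.one_mulVec]
    | succ q ih =>
      intro s'
      have h1 : (B ^ (n * (q + 1))) *ᵥ u = (B ^ (n * q)) *ᵥ ((B ^ n) *ᵥ u) := by
        rw [Matrix.mulVec_mulVec, ← pow_add, Nat.mul_succ]
      rw [h1]
      calc ((B ^ (n * q)) *ᵥ ((B ^ n) *ᵥ u)) s'
          ≤ ((B ^ (n * q)) *ᵥ ((1 - ε) • u)) s' :=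
            mulVec_mono _ (hBk _) (fun s'' => by
              simpa using hBn s'') s'
        _ = (1 - ε) * ((B ^ (n * q)) *ᵥ u) s' := by
            rw [Matrix.mulVec_smul]; simp
        _ ≤ (1 - ε) * ((1 - ε) ^ q * u s') :=
            mul_le_mul_of_nonneg_left (ih s') (by linarith)
        _ = (1 - ε) ^ (q + 1) * u s' := by ring
  -- uniform bound for remainders
  obtain ⟨s₀⟩ := (inferInstance : Nonempty S)
  set K : ℝ := ((Finset.range n) ×ˢ (Finset.univ : Finset S)).sup'
      (Finset.nonempty_product.2 ⟨Finset.nonempty_range_iff.2 hnpos.ne', Finset.univ_nonempty⟩)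
      (fun p => ((B ^ p.1) *ᵥ u) p.2 / u p.2) with hKdef
  have hKbound : ∀ j < n, ∀ s', ((B ^ j) *ᵥ u) s' ≤ K * u s' := by
    intro j hj s'
    have h1 : ((B ^ j) *ᵥ u) s' / u s' ≤ K := by
      rw [hKdef]
      exact Finset.le_sup' (fun p : ℕ × S => ((B ^ p.1) *ᵥ u) p.2 / u p.2)
        (show (j, s') ∈ Finset.range n ×ˢ (Finset.univ : Finset S) from
          Finset.mem_product.2 ⟨Finset.mem_range.2 hj, Finset.mem_univ s'⟩)
    calc ((B ^ j) *ᵥ u) s' = (((B ^ j) *ᵥ u) s' / u s') * u s' :=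
          (div_mul_cancel₀ _ (hu s').ne').symm
      _ ≤ K * u s' := mul_le_mul_of_nonneg_right h1 (hu s').le
  have hK0 : 0 ≤ K := by
    have := hKbound 0 hnpos s₀
    simp [Matrix.one_mulVec] at this
    nlinarith [hu s₀]
  have hfull : ∀ t s', ((B ^ t) *ᵥ u) s' ≤ K * u s' * (1 - ε) ^ (t / n) := by
    intro t s'
    have hsplit : (B ^ t) *ᵥ u = (B ^ (n * (t / n))) *ᵥ ((B ^ (t % n)) *ᵥ u) := by
      rw [Matrix.mulVec_mulVec, ← pow_add, Nat.div_add_mod]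
    rw [hsplit]
    calc ((B ^ (n * (t / n))) *ᵥ ((B ^ (t % n)) *ᵥ u)) s'
        ≤ ((B ^ (n * (t / n))) *ᵥ (K • u)) s' :=
          mulVec_mono _ (hBk _) (fun s'' => by
            simpa using hKbound (t % n) (Nat.mod_lt _ hnpos) s'') s'
      _ = K * ((B ^ (n * (t / n))) *ᵥ u) s' := by rw [Matrix.mulVec_smul]; simp
      _ ≤ K * ((1 - ε) ^ (t / n) * u s') :=
          mul_le_mul_of_nonneg_left (hq (t / n) s') hK0
      _ = K * u s' * (1 - ε) ^ (t / n) := by ring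
  have hdiv : Tendsto (fun t : ℕ => t / n) atTop atTop :=
    tendsto_atTop_atTop.2 fun c => ⟨c * n, fun t ht => (Nat.le_div_iff_mul_le hnpos).2 ht⟩
  have hpow : Tendsto (fun t : ℕ => (1 - ε) ^ (t / n)) atTop (nhds 0) :=
    (tendsto_pow_atTop_nhds_zero_of_lt_one (by linarith) (by linarith)).comp hdiv
  have htendu : ∀ s', Tendsto (fun t => ((B ^ t) *ᵥ u) s') atTop (nhds 0) := by
    intro s'
    refine squeeze_zero (fun t => hBku t s') (fun t => hfull t s') ?_
    have := hpow.const_mul (K * u s')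
    simpa using this
  -- general x
  set C : ℝ := Finset.univ.sup' Finset.univ_nonempty (fun s => |x s| / u s) with hC
  have habs : ∀ s', |x s'| ≤ C * u s' := by
    intro s'
    have h1 : |x s'| / u s' ≤ C := by
      rw [hC]
      exact Finset.le_sup' (fun s => |x s| / u s) (Finset.mem_univ s')
    calc |x s'| = (|x s'| / u s') * u s' := (div_mul_cancel₀ _ (hu s').ne').symm
      _ ≤ C * u s' := mul_le_mul_of_nonneg_right h1 (hu s').le
  have hbound : ∀ t s', |((B ^ t) *ᵥ x) s'| ≤ C * ((B ^ t) *ᵥ u) s' := by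
    intro t s'
    calc |((B ^ t) *ᵥ x) s'| ≤ ∑ s'', |(B ^ t) s' s'' * x s''| :=
          Finset.abs_sum_le_sum_abs _ _
      _ ≤ ∑ s'', (B ^ t) s' s'' * (C * u s'') := by
          refine Finset.sum_le_sum fun s'' _ => ?_
          rw [abs_mul, abs_of_nonneg (hBk t s' s'')]
          exact mul_le_mul_of_nonneg_left (habs s'') (hBk t s' s'')
      _ = C * ((B ^ t) *ᵥ u) s' := by
          simp only [Matrix.mulVec, dotProduct, Finset.mul_sum]
          exact Finset.sum_congr rfl fun s'' _ => by ring
  refine squeeze_zero_norm (fun t => by simpa using hbound t s) ?_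
  have := (htendu s).const_mul C
  simpa using this

end Key

theorem stmt2
    {S A : Type*} [Fintype S] [DecidableEq S] [Nonempty S] [Fintype A] [Nonempty A]
    [DecidableEq A]
    (p r : S → A → Option S → ℝ) (β : ℝ) (hβ : 0 < β)
    (hp_nonneg : ∀ s a s', 0 ≤ p s a s')
    (hp_sum : ∀ s a, ∑ s' : Option S, p s a s' = 1)
    (htransient : ∀ d : S → A, specRad (Pmat p d) < 1)
    (wstar : ℕ → S → ℝ)
    (hws0 : wstar 0 = fun _ => -1)
    (hwssucc : ∀ k, wstar (k + 1) = Lstar p r β (wstar k))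
    (M : ℝ) (hM : ∀ t s, M ≤ wstar t s)
    (winf : S → ℝ)
    (hwinf : Filter.Tendsto wstar Filter.atTop (nhds winf))
    (dstar : S → A)
    (hfix : winf = Bdet p r β dstar *ᵥ winf - bdet p r β dstar) :
    (∀ π : ℕ → S → A → ℝ,
        (∀ k s a, 0 ≤ π k s a) →
        (∀ k s, ∑ a : A, π k s a = 1) →
        ∀ s, Filter.liminf (fun t => ((wpol p r β t π s : ℝ) : EReal)) Filter.atTop
              ≤ (winf s : EReal)) ∧
    Filter.Tendsto (fun t => wpol p r β t (fun _ s a => if a = dstar s then 1 else 0))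
      Filter.atTop (nhds winf) := by
  classical
  have hexp : ∀ s a (o : Option S), 0 < Real.exp (-β * r s a o) := fun _ _ _ => Real.exp_pos _
  have hBmatnn : ∀ (a : A) s s', 0 ≤ Bmat p r β a s s' := fun a s s' =>
    mul_nonneg (hp_nonneg s a (some s')) (hexp s a (some s')).le
  have hbvecnn : ∀ (a : A) s, 0 ≤ bvec p r β a s := fun a s =>
    mul_nonneg (hp_nonneg s a none) (hexp s a none).le
  -- decomposition of randomized rule value
  have hswap : ∀ (d : S → A → ℝ) (w : S → ℝ) (s : S),
      (Brand p r β d *ᵥ w) s - brand p r β d s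
      = ∑ a : A, d s a * ((Bmat p r β a *ᵥ w) s - bvec p r β a s) := by
    intro d w s
    simp only [Brand, brand, Bmat, bvec, Matrix.mulVec, dotProduct, Matrix.of_apply,
      Finset.sum_mul, mul_sub, Finset.mul_sum]
    rw [Finset.sum_comm, ← Finset.sum_sub_distrib]
    refine Finset.sum_congr rfl fun a _ => ?_
    congr 1
    exact Finset.sum_congr rfl fun s' _ => by ring
  -- Part 1: wpol ≤ wstar
  have hwle : ∀ (t : ℕ) (π : ℕ → S → A → ℝ), (∀ k s a, 0 ≤ π k s a) →
      (∀ k s, ∑ a : A, π k s a = 1) → ∀ s, wpol p r β t π s ≤ wstar t s := by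
    intro t
    induction t with
    | zero => intro π _ _ s; rw [hws0]; exact le_refl _
    | succ t ih =>
      intro π hnn hsum s
      have hred : wpol p r β (t + 1) π s
          = (Brand p r β (π 0) *ᵥ wpol p r β t (fun k => π (k + 1))) s
            - brand p r β (π 0) s := rfl
      rw [hred, hwssucc t, hswap]
      have hw : ∀ s', wpol p r β t (fun k => π (k + 1)) s' ≤ wstar t s' :=
        ih _ (fun k s a => hnn (k + 1) s a) (fun k s => hsum (k + 1) s)
      calc ∑ a : A, π 0 s a * ((Bmat p r β a *ᵥ wpol p r β t (fun k => π (k + 1))) s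
              - bvec p r β a s)
          ≤ ∑ a : A, π 0 s a * (Lstar p r β (wstar t) s) := by
            refine Finset.sum_le_sum fun a _ => mul_le_mul_of_nonneg_left ?_ (hnn 0 s a)
            have h1 : (Bmat p r β a *ᵥ wpol p r β t (fun k => π (k + 1))) s
                ≤ (Bmat p r β a *ᵥ wstar t) s :=
              Finset.sum_le_sum fun s' _ =>
                mul_le_mul_of_nonneg_left (hw s') (hBmatnn a s s')
            have h2 : (Bmat p r β a *ᵥ wstar t) s - bvec p r β a s ≤ Lstar p r β (wstar t) s :=
              Finset.le_sup' (fun a : A => (Bmat p r β a *ᵥ wstar t) s - bvec p r β a s)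
                (Finset.mem_univ a)
            linarith
        _ = Lstar p r β (wstar t) s := by
            rw [← Finset.sum_mul, hsum 0 s, one_mul]
  have part1 : ∀ π : ℕ → S → A → ℝ,
      (∀ k s a, 0 ≤ π k s a) → (∀ k s, ∑ a : A, π k s a = 1) →
      ∀ s, Filter.liminf (fun t => ((wpol p r β t π s : ℝ) : EReal)) Filter.atTop
        ≤ (winf s : EReal) := by
    intro π hnn hsum s
    have h2 : Tendsto (fun t => wstar t s) atTop (nhds (winf s)) :=
      (tendsto_pi_nhds.1 hwinf) s
    have h3 : Tendsto (fun t => ((wstar t s : ℝ) : EReal)) atTop (nhds ((winf s : ℝ) : EReal)) :=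
      EReal.tendsto_coe.2 h2
    calc Filter.liminf (fun t => ((wpol p r β t π s : ℝ) : EReal)) Filter.atTop
        ≤ Filter.liminf (fun t => ((wstar t s : ℝ) : EReal)) Filter.atTop := by
          refine Filter.liminf_le_liminf (Filter.Eventually.of_forall fun t => ?_)
          exact_mod_cast hwle t π hnn hsum s
      _ = ((winf s : ℝ) : EReal) := h3.liminf_eq
  refine ⟨part1, ?_⟩
  -- Part 2
  set B := Bdet p r β dstar with hBdef
  set b := bdet p r β dstar with hbdef
  have hBnn : ∀ s s', 0 ≤ B s s' := fun s s' => hBmatnn (dstar s) s s'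
  have hbnn : ∀ s, 0 ≤ b s := fun s => hbvecnn (dstar s) s
  have hw0 : ∀ t s, wstar t s ≤ 0 := by
    intro t
    induction t with
    | zero => intro s; rw [hws0]; norm_num
    | succ t ih =>
      intro s
      rw [hwssucc t]
      refine Finset.sup'_le _ _ fun a _ => ?_
      have h1 : (Bmat p r β a *ᵥ wstar t) s ≤ 0 :=
        Finset.sum_nonpos fun s' _ =>
          mul_nonpos_iff.2 (Or.inl ⟨hBmatnn a s s', ih s'⟩)
      have h2 := hbvecnn a s
      linarith
  have hwinfle : ∀ s, winf s ≤ 0 := fun s =>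
    le_of_tendsto ((tendsto_pi_nhds.1 hwinf) s) (Filter.Eventually.of_forall fun t => hw0 t s)
  set u : S → ℝ := -winf with hudef
  have hu0 : ∀ s, 0 ≤ u s := fun s => neg_nonneg.2 (hwinfle s)
  have hfixco : ∀ s, winf s = (B *ᵥ winf) s - b s := by
    intro s
    conv_lhs => rw [hfix]
    rfl
  have hfixu : ∀ s, (B *ᵥ u) s + b s = u s := by
    intro s
    have h1 : (B *ᵥ u) s = -((B *ᵥ winf) s) := by
      rw [hudef, Matrix.mulVec_neg]; rfl
    have h2 := hfixco s
    have h3 : u s = -winf s := rfl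
    rw [h1, h3]; linarith
  have hrowsum : ∀ s, p s (dstar s) none = 0 → ∑ s' : S, Pmat p dstar s s' = 1 := by
    intro s h0
    have h1 := hp_sum s (dstar s)
    rw [Fintype.sum_option] at h1
    simpa [Pmat, h0] using h1
  have hupos : ∀ s, 0 < u s := by
    by_contra hcon
    push_neg at hcon
    obtain ⟨s₁, hs₁⟩ := hcon
    set Z := Finset.univ.filter (fun s => u s = 0) with hZ
    have hZne : Z.Nonempty :=
      ⟨s₁, Finset.mem_filter.2 ⟨Finset.mem_univ _, le_antisymm hs₁ (hu0 s₁)⟩⟩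
    have hkey : ∀ s ∈ Z, b s = 0 ∧ ∀ s', B s s' * u s' = 0 := by
      intro s hs
      have hus : u s = 0 := (Finset.mem_filter.1 hs).2
      have h1 : (B *ᵥ u) s + b s = 0 := by rw [hfixu s, hus]
      have h2 : 0 ≤ (B *ᵥ u) s := mulVec_nonneg B hBnn hu0 s
      have hb0 : b s = 0 := le_antisymm (by linarith) (hbnn s)
      have h3 : (B *ᵥ u) s = 0 := by linarith
      refine ⟨hb0, fun s' => ?_⟩
      exact (Finset.sum_eq_zero_iff_of_nonneg
        (fun s' _ => mul_nonneg (hBnn s s') (hu0 s'))).1 h3 s' (Finset.mem_univ s')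
    have hout : ∀ s ∈ Z, ∀ s' ∉ Z, Pmat p dstar s s' = 0 := by
      intro s hs s' hs'
      have hus' : 0 < u s' := by
        rcases (hu0 s').lt_or_eq with h | h
        · exact h
        · exact absurd (show s' ∈ Z from
            Finset.mem_filter.2 ⟨Finset.mem_univ _, h.symm⟩) hs'
      have h4 := (hkey s hs).2 s'
      have hB0 : B s s' = 0 := by
        rcases mul_eq_zero.1 h4 with h | h
        · exact h
        · exact absurd h hus'.ne'
      have h5 : p s (dstar s) (some s') * Real.exp (-β * r s (dstar s) (some s')) = 0 := hB0
      simpa [Pmat, (hexp s (dstar s) (some s')).ne'] using h5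
    have hrow : ∀ s ∈ Z, ∑ s' ∈ Z, Pmat p dstar s s' = 1 := by
      intro s hs
      have hp0 : p s (dstar s) none = 0 := by
        have h5 : p s (dstar s) none * Real.exp (-β * r s (dstar s) none) = 0 := (hkey s hs).1
        simpa [(hexp s (dstar s) none).ne'] using h5
      rw [Finset.sum_subset (Finset.subset_univ Z) (fun s' _ h => hout s hs s' h)]
      exact hrowsum s hp0
    exact absurd (htransient dstar) (not_lt.2 (one_le_specRad _ Z hZne hrow hout))
  have hBknn : ∀ k s, 0 ≤ ((B ^ k) *ᵥ b) s := fun k =>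
    mulVec_nonneg _ (entry_pow_nonneg B hBnn k) hbnn
  have hreach : ∀ s, ∃ k, 0 < ((B ^ k) *ᵥ b) s := by
    by_contra hcon
    push_neg at hcon
    obtain ⟨s₁, hs₁⟩ := hcon
    set Z := Finset.univ.filter (fun s => ∀ k, ((B ^ k) *ᵥ b) s = 0) with hZ
    have hZne : Z.Nonempty := ⟨s₁, Finset.mem_filter.2 ⟨Finset.mem_univ _,
      fun k => le_antisymm (hs₁ k) (hBknn k s₁)⟩⟩
    have hout : ∀ s ∈ Z, ∀ s' ∉ Z, Pmat p dstar s s' = 0 := by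
      intro s hs s' hs'
      have hmem := (Finset.mem_filter.1 hs).2
      obtain ⟨k, hk⟩ : ∃ k, ((B ^ k) *ᵥ b) s' ≠ 0 := by
        by_contra h; push_neg at h
        exact hs' (Finset.mem_filter.2 ⟨Finset.mem_univ _, h⟩)
      have hsum0 : ((B ^ (k + 1)) *ᵥ b) s = 0 := hmem (k + 1)
      have hexpand : ((B ^ (k + 1)) *ᵥ b) s = ∑ s'', B s s'' * ((B ^ k) *ᵥ b) s'' := by
        rw [pow_succ', ← Matrix.mulVec_mulVec]
        rfl
      rw [hexpand] at hsum0
      have h6 := (Finset.sum_eq_zero_iff_of_nonneg (fun s'' _ =>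
        mul_nonneg (hBnn s s'') (hBknn k s''))).1 hsum0 s' (Finset.mem_univ s')
      have hB0 : B s s' = 0 := by
        rcases mul_eq_zero.1 h6 with h | h
        · exact h
        · exact absurd h hk
      have h5 : p s (dstar s) (some s') * Real.exp (-β * r s (dstar s) (some s')) = 0 := hB0
      simpa [Pmat, (hexp s (dstar s) (some s')).ne'] using h5
    have hrow : ∀ s ∈ Z, ∑ s' ∈ Z, Pmat p dstar s s' = 1 := by
      intro s hs
      have hb0 : b s = 0 := by
        have h7 := (Finset.mem_filter.1 hs).2 0
        simpa [Matrix.one_mulVec] using h7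
      have hp0 : p s (dstar s) none = 0 := by
        have h5 : p s (dstar s) none * Real.exp (-β * r s (dstar s) none) = 0 := hb0
        simpa [(hexp s (dstar s) none).ne'] using h5
      rw [Finset.sum_subset (Finset.subset_univ Z) (fun s' _ h => hout s hs s' h)]
      exact hrowsum s hp0
    exact absurd (htransient dstar) (not_lt.2 (one_le_specRad _ Z hZne hrow hout))
  -- stationary policy value
  set x : S → ℝ := fun s => -1 - winf s with hxdef
  set πs : ℕ → S → A → ℝ := fun _ s a => if a = dstar s then 1 else 0 with hπs
  have hBrand : Brand p r β (πs 0) = B := by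
    ext s s'
    simp [Brand, hπs, Finset.sum_ite_eq', hBdef, Bdet, Bmat]
  have hbrand : brand p r β (πs 0) = b := by
    funext s
    simp [brand, hπs, Finset.sum_ite_eq', hbdef, bdet, bvec]
  have hv : ∀ t s, wpol p r β t πs s = winf s + ((B ^ t) *ᵥ x) s := by
    intro t
    induction t with
    | zero =>
      intro s
      show (-1 : ℝ) = winf s + ((B ^ 0) *ᵥ x) s
      rw [pow_zero, Matrix.one_mulVec]
      show (-1 : ℝ) = winf s + (-1 - winf s)
      ring
    | succ t ih =>
      intro s
      have hred : wpol p r β (t + 1) πs s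
          = (Brand p r β (πs 0) *ᵥ wpol p r β t (fun k => πs (k + 1))) s
            - brand p r β (πs 0) s := rfl
      have hshift : (fun k => πs (k + 1)) = πs := rfl
      rw [hred, hshift, hBrand, hbrand]
      have h1 : wpol p r β t πs = winf + (B ^ t) *ᵥ x := funext fun s' => ih s'
      rw [h1, Matrix.mulVec_add]
      have h3 : B *ᵥ ((B ^ t) *ᵥ x) = (B ^ (t + 1)) *ᵥ x := by
        rw [Matrix.mulVec_mulVec, ← pow_succ']
      rw [h3]
      have h4 := hfixco s
      simp only [Pi.add_apply]
      linarith
  rw [tendsto_pi_nhds]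
  intro s
  have hkey := key_tendsto B hBnn u b hupos hbnn hfixu hreach x s
  have heq : (fun t => wpol p r β t πs s) = fun t => winf s + ((B ^ t) *ᵥ x) s :=
    funext fun t => hv t s
  rw [heq]
  simpa using tendsto_const_nhds.add hkey
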